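/- arXiv:2504.19527 — 2 statements merged into one kernel-verified Lean document; each statement's English description precedes it below -/
import Mathlib

section
/- Inverse selection-score reweighting recovers the full conditional mean (key step in the proof of Eq. (2)). Let (Ω, 𝒜, P) be a probability space with Ω a standard Borel space, 𝒢 ⊆ 𝒜 a sub-σ-algebra, Z : Ω → ℝ a P-integrable random variable, and R : Ω → {0,1} measurable. Assume σ(Z) and σ(R) are conditionally independent given 𝒢, let r be a 𝒢-measurable random variable that is a version of E[𝟙{R=1} | 𝒢] with r > 0 P-a.s., and assume 𝟙{R=1} · Z / r is P-integrable. Then E[ 𝟙{R=1} · Z / r | 𝒢 ] = E[Z | 𝒢] P-almost surely. -/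
open MeasureTheory ProbabilityTheory Set

/-- **Inverse selection-score reweighting recovers the full conditional mean.**
If `σ(Z)` and `σ(R)` are conditionally independent given `𝒢`, `r` is a `𝒢`-measurable
a.s.-positive version of `E[𝟙{R=1} | 𝒢]`, and `𝟙{R=1}·Z/r` is integrable, then
`E[𝟙{R=1}·Z/r | 𝒢] = E[Z | 𝒢]` `P`-a.s. -/
theorem stmt10
    {Ω : Type*} [mΩ : MeasurableSpace Ω] [StandardBorelSpace Ω] [Nonempty Ω]
    (P : Measure Ω) [IsProbabilityMeasure P]
    (𝒢 : MeasurableSpace Ω) (h𝒢 : 𝒢 ≤ mΩ)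
    (Z : Ω → ℝ) (hZ : Measurable[mΩ] Z) (hZint : Integrable Z P)
    (R : Ω → Bool) (hR : Measurable[mΩ] R)
    (hCI : CondIndep 𝒢 (MeasurableSpace.comap Z inferInstance)
      (MeasurableSpace.comap R inferInstance) h𝒢 P)
    (r : Ω → ℝ) (hrMeas : Measurable[𝒢] r)
    (hrVer : r =ᵐ[P] P[({ω | R ω = true}).indicator (fun _ => (1 : ℝ)) | 𝒢])
    (hrPos : ∀ᵐ ω ∂P, 0 < r ω)
    (hWint : Integrable
      (fun ω => ({ω' | R ω' = true}).indicator (fun _ => (1 : ℝ)) ω * Z ω / r ω) P) :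
    P[fun ω => ({ω' | R ω' = true}).indicator (fun _ => (1 : ℝ)) ω * Z ω / r ω | 𝒢]
      =ᵐ[P] P[Z | 𝒢] := by
  letI : MeasurableSpace Ω := mΩ
  set B : Set Ω := {ω' | R ω' = true} with hBdef
  have hB : MeasurableSet[mΩ] B := hR (measurableSet_singleton true)
  have hσZ : MeasurableSpace.comap Z inferInstance ≤ mΩ := by
    rintro s ⟨t, ht, rfl⟩; exact hZ ht
  have hZme : @Measurable Ω ℝ (MeasurableSpace.comap Z inferInstance) _ Z :=
    fun t ht => ⟨t, ht, rfl⟩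
  have hZsm : StronglyMeasurable[MeasurableSpace.comap Z inferInstance] Z :=
    hZme.stronglyMeasurable
  -- the generating countable π-system of σ(Z)
  set C : Set (Set Ω) := (Set.preimage Z) '' (⋃ a : ℚ, {Iio (a : ℝ)}) with hCdef
  have hgen : MeasurableSpace.comap Z inferInstance = MeasurableSpace.generateFrom C := by
    rw [show (inferInstance : MeasurableSpace ℝ) = borel ℝ from BorelSpace.measurable_eq,
      Real.borel_eq_generateFrom_Iio_rat, MeasurableSpace.comap_generateFrom]
  have hCpi : IsPiSystem C := Real.isPiSystem_Iio_rat.comap Z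
  have hCc : C.Countable :=
    ((Set.countable_iUnion fun _ => Set.countable_singleton _).image _)
  set κ := condExpKernel P 𝒢 with hκdef
  -- conditional independence gives the product rule for the kernel on C
  have hker : ∀ᵐ ω ∂P, ∀ s ∈ C, κ ω (s ∩ B) = κ ω s * κ ω B := by
    rw [ae_ball_iff hCc]
    intro s hs
    obtain ⟨t, ht, rfl⟩ := hs
    have htm : MeasurableSet t := by
      simp only [Set.mem_iUnion, Set.mem_singleton_iff] at ht
      obtain ⟨a, rfl⟩ := ht
      exact measurableSet_Iio
    have h1 : MeasurableSet[MeasurableSpace.comap Z inferInstance] (Z ⁻¹' t) := ⟨t, htm, rfl⟩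
    have h2 : MeasurableSet[MeasurableSpace.comap R inferInstance] B :=
      ⟨{true}, trivial, rfl⟩
    exact ae_of_ae_trim h𝒢 (hCI (Z ⁻¹' t) B h1 h2)
  -- key pointwise identity for the kernel
  have key : ∀ᵐ ω ∂P, ∫ y, B.indicator (fun _ => (1 : ℝ)) y * Z y ∂(κ ω)
      = (κ ω B).toReal * ∫ y, Z y ∂(κ ω) := by
    filter_upwards [hker] with ω hω
    have hprob : IsProbabilityMeasure (κ ω) := IsMarkovKernel.isProbabilityMeasure ω
    set ν₁ := (κ ω).restrict B with hν₁
    set ν₂ := (κ ω B) • (κ ω) with hν₂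
    have htrim : ν₁.trim hσZ = ν₂.trim hσZ := by
      refine ext_of_generate_finite C hgen hCpi (fun s hs => ?_) ?_
      · have hsm : MeasurableSet[MeasurableSpace.comap Z inferInstance] s := by
          rw [hgen]; exact MeasurableSpace.measurableSet_generateFrom hs
        rw [trim_measurableSet_eq hσZ hsm, trim_measurableSet_eq hσZ hsm, hν₁, hν₂,
          Measure.restrict_apply (hσZ s hsm), Measure.smul_apply, smul_eq_mul,
          hω s hs, mul_comm]
      · rw [trim_measurableSet_eq hσZ (@MeasurableSet.univ Ω (MeasurableSpace.comap Z inferInstance)),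
          trim_measurableSet_eq hσZ (@MeasurableSet.univ Ω (MeasurableSpace.comap Z inferInstance)), hν₁, hν₂,
          Measure.restrict_apply_univ, Measure.smul_apply, smul_eq_mul,
          measure_univ, mul_one]
    have h1 : (fun y => B.indicator (fun _ => (1 : ℝ)) y * Z y) = B.indicator Z := by
      funext y
      by_cases hy : y ∈ B <;> simp [Set.indicator, hy]
    calc ∫ y, B.indicator (fun _ => (1 : ℝ)) y * Z y ∂(κ ω)
        = ∫ y, B.indicator Z y ∂(κ ω) := by rw [h1]
      _ = ∫ y, Z y ∂ν₁ := integral_indicator hB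
      _ = ∫ y, Z y ∂(ν₁.trim hσZ) := integral_trim hσZ hZsm
      _ = ∫ y, Z y ∂(ν₂.trim hσZ) := by rw [htrim]
      _ = ∫ y, Z y ∂ν₂ := (integral_trim hσZ hZsm).symm
      _ = (κ ω B).toReal * ∫ y, Z y ∂(κ ω) := by
          rw [hν₂, integral_smul_measure, smul_eq_mul]
  -- integrability of 𝟙_B · Z
  have hBZint : Integrable (fun ω => B.indicator (fun _ => (1 : ℝ)) ω * Z ω) P := by
    refine (hZint.indicator hB).congr (Filter.Eventually.of_forall fun ω => ?_)
    by_cases hω : ω ∈ B <;> simp [Set.indicator, hω]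
  -- r agrees a.e. with the kernel measure of B
  have hr' : r =ᵐ[P] fun ω => (κ ω B).toReal :=
    hrVer.trans (condExpKernel_ae_eq_condExp h𝒢 hB).symm
  -- step 2: E[𝟙_B Z | 𝒢] = r · E[Z | 𝒢]
  have step2 : P[fun ω => B.indicator (fun _ => (1 : ℝ)) ω * Z ω | 𝒢]
      =ᵐ[P] fun ω => r ω * (P[Z | 𝒢]) ω := by
    filter_upwards [condExp_ae_eq_integral_condExpKernel h𝒢 hBZint,
      condExp_ae_eq_integral_condExpKernel h𝒢 hZint, key, hr'] with ω h1 h2 h3 h4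
    rw [h1, h3, h2, h4]
  -- assemble
  have e1 : P[fun ω => B.indicator (fun _ => (1 : ℝ)) ω * Z ω / r ω | 𝒢]
      =ᵐ[P] P[(fun ω => (r ω)⁻¹) * (fun ω => B.indicator (fun _ => (1 : ℝ)) ω * Z ω) | 𝒢] :=
    condExp_congr_ae (Filter.Eventually.of_forall fun ω => by
      simp [Pi.mul_apply, div_eq_inv_mul])
  have e2 : P[(fun ω => (r ω)⁻¹) * (fun ω => B.indicator (fun _ => (1 : ℝ)) ω * Z ω) | 𝒢]
      =ᵐ[P] (fun ω => (r ω)⁻¹) * P[fun ω => B.indicator (fun _ => (1 : ℝ)) ω * Z ω | 𝒢] := by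
    refine condExp_mul_of_stronglyMeasurable_left (hrMeas.inv.stronglyMeasurable) ?_ hBZint
    exact hWint.congr (Filter.Eventually.of_forall fun ω => by
      simp [Pi.mul_apply, div_eq_inv_mul])
  have e3 : (fun ω => (r ω)⁻¹) * P[fun ω => B.indicator (fun _ => (1 : ℝ)) ω * Z ω | 𝒢]
      =ᵐ[P] P[Z | 𝒢] := by
    filter_upwards [step2, hrPos] with ω h1 h2
    simp only [Pi.mul_apply, h1]
    rw [inv_mul_cancel_left₀ h2.ne']
  exact (e1.trans e2).trans e3
end

section
/- Conditional g-formula: the arm-conditional observed mean identifies the potential-outcome conditional mean. Fix a ∈ {0,1} with P(A=a) > 0. Assume consistency; that σ(Y(a)) and σ(A) are conditionally independent given σ(X); that Y(a) is P-integrable; and that there is a measurable e_a : 𝒳 → ℝ with e_a(X) a version of P(A=a | σ(X)) and e_a(X) > 0 P-a.s. Let m_a : 𝒳 → ℝ be any measurable function such that m_a(X) is a version of the conditional expectation of Y given σ(X) under the conditional measure P(·|{A=a}), with m_a(X) P-integrable. Then m_a(X) = E[ Y(a) | σ(X) ] P-almost surely. -/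
open MeasureTheory ProbabilityTheory

/-- **Conditional g-formula:** the arm-conditional observed mean identifies the
potential-outcome conditional mean. If `Y = Y(A)` (consistency), `σ(Y(a)) ⫫ σ(A) | σ(X)`,
`Y(a)` is integrable, and the propensity score `e_a(X)` is a.s. positive, then any
measurable `m_a` with `m_a(X)` a version of `E[Y | σ(X)]` under `P(·|{A=a})` satisfies
`m_a(X) = E[Y(a) | σ(X)]` `P`-a.s. -/
theorem stmt15
    {Ω 𝓧 : Type*} [mΩ : MeasurableSpace Ω] [StandardBorelSpace Ω] [Nonempty Ω]
    [m𝓧 : MeasurableSpace 𝓧] [StandardBorelSpace 𝓧]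
    (P : Measure Ω) [IsProbabilityMeasure P]
    (X : Ω → 𝓧) (hX : Measurable X)
    (A : Ω → Bool) (hA : Measurable A)
    (Y : Bool → Ω → ℝ) (hYmeas : ∀ a, Measurable (Y a))
    (Yo : Ω → ℝ) (hconsY : Yo = fun ω => Y (A ω) ω)
    -- fixed arm with positive probability
    (a : Bool) (haPos : 0 < P {ω | A ω = a})
    -- unconfoundedness: Y(a) ⫫ A | σ(X)
    (hunconf : CondIndep (MeasurableSpace.comap X m𝓧)
      (MeasurableSpace.comap (Y a) inferInstance)
      (MeasurableSpace.comap A inferInstance) hX.comap_le P)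
    (hYaInt : Integrable (Y a) P)
    -- propensity score, a.s. positive
    (e : 𝓧 → ℝ) (he : Measurable e)
    (heVer : (fun ω => e (X ω)) =ᵐ[P]
      P[({ω | A ω = a}).indicator (fun _ => (1 : ℝ)) | MeasurableSpace.comap X m𝓧])
    (hePos : ∀ᵐ ω ∂P, 0 < e (X ω))
    -- m : version of E[Y | σ(X)] under P(·|{A=a})
    (m : 𝓧 → ℝ) (hm : Measurable m)
    (hmVer : (fun ω => m (X ω)) =ᵐ[P[|{ω | A ω = a}]]
      (P[|{ω | A ω = a}])[Yo | MeasurableSpace.comap X m𝓧])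
    (hmInt : Integrable (fun ω => m (X ω)) P) :
    (fun ω => m (X ω)) =ᵐ[P] P[Y a | MeasurableSpace.comap X m𝓧] := by
  classical
  have hGle : (MeasurableSpace.comap X m𝓧) ≤ mΩ := hX.comap_le
  set B : Set Ω := {ω | A ω = a} with hBdef
  have hBmeas : MeasurableSet B := hA (measurableSet_singleton a)
  have hB0 : P B ≠ 0 := haPos.ne'
  set I : Ω → ℝ := B.indicator (fun _ => (1 : ℝ)) with hIdef
  have hmulI : ∀ h : Ω → ℝ, (fun ω => h ω * I ω) = B.indicator h := by
    intro h; funext x; by_cases hx : x ∈ B <;> simp [hIdef, hx]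
  have hXG : Measurable[(MeasurableSpace.comap X m𝓧)] X := Measurable.of_comap_le le_rfl
  have hmX : StronglyMeasurable[(MeasurableSpace.comap X m𝓧)] (fun ω => m (X ω)) := (hm.comp hXG).stronglyMeasurable
  have heX : StronglyMeasurable[(MeasurableSpace.comap X m𝓧)] (fun ω => e (X ω)) := (he.comp hXG).stronglyMeasurable
  have hIint : Integrable I P := (integrable_const (1 : ℝ)).indicator hBmeas
  -- `e ∘ X` is a.e. bounded by 1
  have hI01 : (0 : Ω → ℝ) ≤ᵐ[P] P[I|(MeasurableSpace.comap X m𝓧)] :=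
    condExp_nonneg (Filter.Eventually.of_forall fun ω =>
      Set.indicator_nonneg (fun _ _ => zero_le_one) ω)
  have hIle1 : P[I|(MeasurableSpace.comap X m𝓧)] ≤ᵐ[P] (fun _ => (1 : ℝ)) := by
    have h := condExp_mono (m := (MeasurableSpace.comap X m𝓧)) hIint (integrable_const (1 : ℝ))
      (Filter.Eventually.of_forall fun ω => Set.indicator_le_self' (fun _ _ => zero_le_one) ω)
    rwa [condExp_const hGle] at h
  have heBound : ∀ᵐ ω ∂P, ‖e (X ω)‖ ≤ 1 := by
    filter_upwards [heVer, hI01, hIle1] with ω h1 h2 h3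
    rw [Real.norm_eq_abs, abs_le]
    constructor
    · rw [h1]; exact le_trans (by norm_num) h2
    · rw [h1]; exact h3
  -- pull-out helper: for (MeasurableSpace.comap X m𝓧)-measurable integrable h, ∫_G h·1_B = ∫_G h·(e∘X)
  have hpull : ∀ (h : Ω → ℝ), StronglyMeasurable[(MeasurableSpace.comap X m𝓧)] h → Integrable h P →
      ∀ G, MeasurableSet[(MeasurableSpace.comap X m𝓧)] G →
      ∫ x in G, h x * I x ∂P = ∫ x in G, h x * e (X x) ∂P := by
    intro h hh hhInt G hG
    have hhI : Integrable (fun ω => h ω * I ω) P := by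
      rw [hmulI]; exact hhInt.indicator hBmeas
    have hpull' : P[(fun ω => h ω * I ω)|(MeasurableSpace.comap X m𝓧)] =ᵐ[P] fun ω => h ω * (P[I|(MeasurableSpace.comap X m𝓧)]) ω := by
      have := condExp_mul_of_stronglyMeasurable_left (m := (MeasurableSpace.comap X m𝓧)) hh hhI hIint
      exact this
    calc ∫ x in G, h x * I x ∂P
        = ∫ x in G, (P[(fun ω => h ω * I ω)|(MeasurableSpace.comap X m𝓧)]) x ∂P :=
          (setIntegral_condExp hGle hhI hG).symm
      _ = ∫ x in G, h x * (P[I|(MeasurableSpace.comap X m𝓧)]) x ∂P :=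
          setIntegral_congr_ae (hGle _ hG) (hpull'.mono fun x hx _ => hx)
      _ = ∫ x in G, h x * e (X x) ∂P := by
          refine setIntegral_congr_ae (hGle _ hG) ?_
          filter_upwards [heVer] with x hx _
          rw [hx]
  -- (MeasurableSpace.comap (Y a) inferInstance) := σ(Y a)
  have hle₁ : (MeasurableSpace.comap (Y a) inferInstance) ≤ mΩ := (hYmeas a).comap_le
  have hYa_sm : StronglyMeasurable[(MeasurableSpace.comap (Y a) inferInstance)] (Y a) :=
    (Measurable.of_comap_le le_rfl).stronglyMeasurable
  have hB_m₂ : MeasurableSet[MeasurableSpace.comap A inferInstance] B :=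
    ⟨{a}, measurableSet_singleton a, rfl⟩
  have hCI := (condIndep_iff (MeasurableSpace.comap X m𝓧) (MeasurableSpace.comap (Y a) inferInstance) (MeasurableSpace.comap A inferInstance)
    hGle hle₁ hA.comap_le P).mp hunconf
  -- KEY: ∫_{G∩B} Y a = ∫_{G∩B} E[Y a|(MeasurableSpace.comap X m𝓧)]
  have hKey : ∀ G, MeasurableSet[(MeasurableSpace.comap X m𝓧)] G →
      ∫ x in G ∩ B, Y a x ∂P = ∫ x in G ∩ B, (P[Y a|(MeasurableSpace.comap X m𝓧)]) x ∂P := by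
    intro G hG
    have hQ : ∀ ⦃f : Ω → ℝ⦄, MemLp f 1 P → AEStronglyMeasurable[MeasurableSpace.comap (Y a) inferInstance] f P →
        ∫ x in G ∩ B, f x ∂P = ∫ x in G ∩ B, (P[f|(MeasurableSpace.comap X m𝓧)]) x ∂P := by
      refine MemLp.induction_stronglyMeasurable hle₁ ENNReal.one_ne_top
        (fun f => ∫ x in G ∩ B, f x ∂P = ∫ x in G ∩ B, (P[f|(MeasurableSpace.comap X m𝓧)]) x ∂P) ?_ ?_ ?_ ?_
      · -- indicator case
        intro c s hms _
        have hsmeas : MeasurableSet s := hle₁ _ hms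
        have hsmul : s.indicator (fun _ => c) = c • s.indicator (fun _ => (1 : ℝ)) := by
          funext x; by_cases hx : x ∈ s <;> simp [hx]
        set κ : Ω → ℝ := P[s.indicator (fun _ => (1 : ℝ))|(MeasurableSpace.comap X m𝓧)] with hκdef
        have hκI : Integrable (fun ω => κ ω * I ω) P := by
          rw [hmulI]; exact integrable_condExp.indicator hBmeas
        have hκpull : P[(fun ω => κ ω * I ω)|(MeasurableSpace.comap X m𝓧)] =ᵐ[P] fun ω => κ ω * (P[I|(MeasurableSpace.comap X m𝓧)]) ω :=
          condExp_mul_of_stronglyMeasurable_left (m := (MeasurableSpace.comap X m𝓧)) stronglyMeasurable_condExp hκI hIint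
        have hfact := hCI s B hms hB_m₂
        have step : ∫ x in G ∩ B, κ x ∂P = (P (G ∩ (s ∩ B))).toReal := by
          calc ∫ x in G ∩ B, κ x ∂P
              = ∫ x in G, B.indicator κ x ∂P := (setIntegral_indicator hBmeas).symm
            _ = ∫ x in G, κ x * I x ∂P := by rw [← hmulI]
            _ = ∫ x in G, (P[(fun ω => κ ω * I ω)|(MeasurableSpace.comap X m𝓧)]) x ∂P :=
                (setIntegral_condExp hGle hκI hG).symm
            _ = ∫ x in G, (P[(s ∩ B).indicator (fun _ => (1 : ℝ))|(MeasurableSpace.comap X m𝓧)]) x ∂P := by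
                refine setIntegral_congr_ae (hGle _ hG) ?_
                filter_upwards [hκpull, hfact] with x h1 h2 _
                rw [h1, h2]
                rfl
            _ = ∫ x in G, (s ∩ B).indicator (fun _ => (1 : ℝ)) x ∂P :=
                setIntegral_condExp hGle ((integrable_const (1 : ℝ)).indicator
                  (hsmeas.inter hBmeas)) hG
            _ = ∫ x in G ∩ (s ∩ B), (1 : ℝ) ∂P :=
                setIntegral_indicator (hsmeas.inter hBmeas)
            _ = (P (G ∩ (s ∩ B))).toReal := by simp [Measure.real]
        have hL : ∫ x in G ∩ B, s.indicator (fun _ => c) x ∂P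
            = (P (G ∩ (s ∩ B))).toReal * c := by
          rw [setIntegral_indicator hsmeas, setIntegral_const, smul_eq_mul]
          congr 2
          rw [Set.inter_assoc, Set.inter_comm B s]
        have hR : ∫ x in G ∩ B, (P[s.indicator (fun _ => c)|(MeasurableSpace.comap X m𝓧)]) x ∂P
            = c * ∫ x in G ∩ B, κ x ∂P := by
          rw [hsmul]
          have hsm := condExp_smul (m := (MeasurableSpace.comap X m𝓧)) (μ := P) c (s.indicator (fun _ => (1 : ℝ)))
          rw [setIntegral_congr_ae ((hGle _ hG).inter hBmeas) (hsm.mono fun x hx _ => hx)]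
          simp only [Pi.smul_apply, smul_eq_mul]
          rw [integral_const_mul]
        rw [hL, hR, step, mul_comm]
      · -- additivity
        intro f g _ hfm hgm _ _ hQf hQg
        have hfi : Integrable f P := memLp_one_iff_integrable.1 hfm
        have hgi : Integrable g P := memLp_one_iff_integrable.1 hgm
        have hce : P[f + g|(MeasurableSpace.comap X m𝓧)] =ᵐ[P] P[f|(MeasurableSpace.comap X m𝓧)] + P[g|(MeasurableSpace.comap X m𝓧)] := condExp_add hfi hgi _
        have h1 : ∫ x in G ∩ B, (f + g) x ∂P
            = (∫ x in G ∩ B, f x ∂P) + ∫ x in G ∩ B, g x ∂P := by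
          simp only [Pi.add_apply]
          exact integral_add hfi.integrableOn hgi.integrableOn
        have h2 : ∫ x in G ∩ B, (P[f + g|(MeasurableSpace.comap X m𝓧)]) x ∂P
            = (∫ x in G ∩ B, (P[f|(MeasurableSpace.comap X m𝓧)]) x ∂P) + ∫ x in G ∩ B, (P[g|(MeasurableSpace.comap X m𝓧)]) x ∂P := by
          rw [setIntegral_congr_ae ((hGle _ hG).inter hBmeas) (hce.mono fun x hx _ => hx)]
          simp only [Pi.add_apply]
          exact integral_add integrable_condExp.integrableOn integrable_condExp.integrableOn
        rw [h1, h2, hQf, hQg]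
      · -- closedness
        have hcont1 : Continuous fun f : lpMeas ℝ ℝ (MeasurableSpace.comap (Y a) inferInstance) 1 P =>
            ∫ x in G ∩ B, (f : Ω → ℝ) x ∂P := by
          have : (fun f : lpMeas ℝ ℝ (MeasurableSpace.comap (Y a) inferInstance) 1 P => ∫ x in G ∩ B, (f : Ω → ℝ) x ∂P)
              = (fun f : Lp ℝ 1 P => ∫ x in G ∩ B, f x ∂P) ∘
                (Submodule.subtypeL (lpMeas ℝ ℝ (MeasurableSpace.comap (Y a) inferInstance) 1 P)) := rfl
          rw [this]
          exact (continuous_setIntegral _).comp (ContinuousLinearMap.continuous _)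
        have hcont2 : Continuous fun f : lpMeas ℝ ℝ (MeasurableSpace.comap (Y a) inferInstance) 1 P =>
            ∫ x in G ∩ B, (condExpL1CLM ℝ hGle P ((f : Lp ℝ 1 P)) : Ω → ℝ) x ∂P := by
          have : (fun f : lpMeas ℝ ℝ (MeasurableSpace.comap (Y a) inferInstance) 1 P =>
              ∫ x in G ∩ B, (condExpL1CLM ℝ hGle P ((f : Lp ℝ 1 P)) : Ω → ℝ) x ∂P)
              = (fun f : Lp ℝ 1 P => ∫ x in G ∩ B, f x ∂P) ∘
                ((condExpL1CLM ℝ hGle P).comp (Submodule.subtypeL (lpMeas ℝ ℝ (MeasurableSpace.comap (Y a) inferInstance) 1 P))) := rfl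
          rw [this]
          exact (continuous_setIntegral _).comp (ContinuousLinearMap.continuous _)
        have hset : {f : lpMeas ℝ ℝ (MeasurableSpace.comap (Y a) inferInstance) 1 P |
            ∫ x in G ∩ B, (f : Ω → ℝ) x ∂P = ∫ x in G ∩ B, (P[(f : Ω → ℝ)|(MeasurableSpace.comap X m𝓧)]) x ∂P}
            = {f : lpMeas ℝ ℝ (MeasurableSpace.comap (Y a) inferInstance) 1 P | ∫ x in G ∩ B, (f : Ω → ℝ) x ∂P
              = ∫ x in G ∩ B, (condExpL1CLM ℝ hGle P ((f : Lp ℝ 1 P)) : Ω → ℝ) x ∂P} := by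
          ext f
          simp only [Set.mem_setOf_eq]
          have hfInt : Integrable (f : Ω → ℝ) P := L1.integrable_coeFn _
          have heq : P[(f : Ω → ℝ)|(MeasurableSpace.comap X m𝓧)] =ᵐ[P]
              (condExpL1CLM ℝ hGle P ((f : Lp ℝ 1 P)) : Ω → ℝ) := by
            have h := condExp_ae_eq_condExpL1CLM hGle hfInt
            rwa [Integrable.toL1_coeFn _ hfInt] at h
          rw [setIntegral_congr_ae ((hGle _ hG).inter hBmeas) (heq.mono fun x hx _ => hx)]
        rw [hset]
        exact isClosed_eq hcont1 hcont2
      · -- a.e. invariance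
        intro f g hfg _ hQf
        have hce : P[f|(MeasurableSpace.comap X m𝓧)] =ᵐ[P] P[g|(MeasurableSpace.comap X m𝓧)] := condExp_congr_ae hfg
        rw [← setIntegral_congr_ae ((hGle _ hG).inter hBmeas) (hfg.mono fun x hx _ => hx),
          ← setIntegral_congr_ae ((hGle _ hG).inter hBmeas) (hce.mono fun x hx _ => hx)]
        exact hQf
    exact hQ (memLp_one_iff_integrable.2 hYaInt) ⟨Y a, hYa_sm, Filter.EventuallyEq.rfl⟩
  -- the conditional measure P[|B]
  haveI : IsProbabilityMeasure (P[|B]) := cond_isProbabilityMeasure hB0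
  have hYo_restrict : Yo =ᵐ[P.restrict B] Y a := by
    rw [hconsY]
    filter_upwards [ae_restrict_mem hBmeas] with ω hω
    have : A ω = a := hω
    rw [this]
  have hYoB : Integrable Yo (P[|B]) := by
    show Integrable Yo ((P B)⁻¹ • P.restrict B)
    refine Integrable.smul_measure ?_ (by simp [hB0])
    exact (hYaInt.restrict (s := B)).congr hYo_restrict.symm
  have hcondInt : ∀ (f : Ω → ℝ) (G : Set Ω), MeasurableSet G →
      ∫ x in G, f x ∂(P[|B]) = (P B)⁻¹.toReal * ∫ x in G ∩ B, f x ∂P := by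
    intro f G hGm
    show ∫ x in G, f x ∂((P B)⁻¹ • P.restrict B) = _
    rw [Measure.restrict_smul, integral_smul_measure, Measure.restrict_restrict hGm,
      smul_eq_mul]
  -- step 2: ∫_{G∩B} m(X) = ∫_{G∩B} Y a
  have hstep2 : ∀ G, MeasurableSet[(MeasurableSpace.comap X m𝓧)] G →
      ∫ x in G ∩ B, m (X x) ∂P = ∫ x in G ∩ B, Y a x ∂P := by
    intro G hG
    have hGm : MeasurableSet G := hGle _ hG
    have h1 : ∫ x in G, m (X x) ∂(P[|B]) = ∫ x in G, Yo x ∂(P[|B]) := by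
      rw [setIntegral_congr_ae hGm (hmVer.mono fun x hx _ => hx)]
      exact setIntegral_condExp hGle hYoB hG
    have h2 := hcondInt (fun ω => m (X ω)) G hGm
    have h3 := hcondInt Yo G hGm
    have hc : (P B)⁻¹.toReal ≠ 0 := by
      simp only [ne_eq, ENNReal.toReal_eq_zero_iff, not_or]
      constructor
      · simp [measure_ne_top P B]
      · simp [hB0]
    have h4 : ∫ x in G ∩ B, Yo x ∂P = ∫ x in G ∩ B, Y a x ∂P := by
      refine setIntegral_congr_ae (hGm.inter hBmeas) ?_
      filter_upwards with x hx
      have : A x = a := hx.2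
      rw [hconsY]; simp only []; rw [this]
    rw [h2, h3] at h1
    have h5 := mul_left_cancel₀ hc h1
    rw [h5, h4]
  -- integrability of the products with e∘X
  have hg1int : Integrable (fun ω => m (X ω) * e (X ω)) P := by
    have h := Integrable.bdd_mul (c := 1) hmInt
      ((he.comp hX).aestronglyMeasurable) heBound
    exact h.congr (Filter.Eventually.of_forall fun ω => by simp [mul_comm])
  have hg2int : Integrable (fun ω => (P[Y a|(MeasurableSpace.comap X m𝓧)]) ω * e (X ω)) P := by
    have h := Integrable.bdd_mul (c := 1) (integrable_condExp (f := Y a) (m := (MeasurableSpace.comap X m𝓧)))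
      ((he.comp hX).aestronglyMeasurable) heBound
    exact h.congr (Filter.Eventually.of_forall fun ω => by simp [mul_comm])
  have hInd : Integrable (B.indicator (Y a)) P := hYaInt.indicator hBmeas
  -- both products are versions of E[1_B·Y(a) | (MeasurableSpace.comap X m𝓧)]
  have hg1 : (fun ω => m (X ω) * e (X ω)) =ᵐ[P] P[B.indicator (Y a)|(MeasurableSpace.comap X m𝓧)] := by
    refine ae_eq_condExp_of_forall_setIntegral_eq hGle hInd
      (fun s _ _ => hg1int.integrableOn) (fun G hG _ => ?_)
      (hmX.mul heX).aestronglyMeasurable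
    calc ∫ x in G, m (X x) * e (X x) ∂P
        = ∫ x in G, m (X x) * I x ∂P := (hpull _ hmX hmInt G hG).symm
      _ = ∫ x in G, B.indicator (fun ω => m (X ω)) x ∂P := by
          rw [← hmulI (fun ω => m (X ω))]
      _ = ∫ x in G ∩ B, m (X x) ∂P := setIntegral_indicator hBmeas
      _ = ∫ x in G ∩ B, Y a x ∂P := hstep2 G hG
      _ = ∫ x in G, B.indicator (Y a) x ∂P := (setIntegral_indicator hBmeas).symm
  have hg2 : (fun ω => (P[Y a|(MeasurableSpace.comap X m𝓧)]) ω * e (X ω)) =ᵐ[P] P[B.indicator (Y a)|(MeasurableSpace.comap X m𝓧)] := by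
    refine ae_eq_condExp_of_forall_setIntegral_eq hGle hInd
      (fun s _ _ => hg2int.integrableOn) (fun G hG _ => ?_)
      (stronglyMeasurable_condExp.mul heX).aestronglyMeasurable
    calc ∫ x in G, (P[Y a|(MeasurableSpace.comap X m𝓧)]) x * e (X x) ∂P
        = ∫ x in G, (P[Y a|(MeasurableSpace.comap X m𝓧)]) x * I x ∂P :=
          (hpull _ stronglyMeasurable_condExp integrable_condExp G hG).symm
      _ = ∫ x in G, B.indicator (P[Y a|(MeasurableSpace.comap X m𝓧)]) x ∂P := by
          rw [← hmulI (P[Y a|(MeasurableSpace.comap X m𝓧)])]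
      _ = ∫ x in G ∩ B, (P[Y a|(MeasurableSpace.comap X m𝓧)]) x ∂P := setIntegral_indicator hBmeas
      _ = ∫ x in G ∩ B, Y a x ∂P := (hKey G hG).symm
      _ = ∫ x in G, B.indicator (Y a) x ∂P := (setIntegral_indicator hBmeas).symm
  have hfinal : (fun ω => m (X ω) * e (X ω)) =ᵐ[P]
      fun ω => (P[Y a|(MeasurableSpace.comap X m𝓧)]) ω * e (X ω) := hg1.trans hg2.symm
  filter_upwards [hfinal, hePos] with ω h1 h2
  exact mul_right_cancel₀ (ne_of_gt h2) h1
end
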